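/- Let Ω ⊆ ℝ^m be open with torsion-free C^∞ Christoffel symbols Γ^λ_{μν} : Ω → ℝ (i.e. Γ^λ_{μν} = Γ^λ_{νμ}), let φ : W → Ω be a geodesic flow, let γ : I → Ω be a C^∞ curve, let f(t,s) = φ(γ(t), γ'(t), s) be the ∇-tangent surface defined on an open neighborhood V of I × {0}, and let F : V → ℝ^m be a C^∞ map with s · F(t,s) = ∂f/∂t(t,s) − ∂f/∂s(t,s) on V. Then for all t ∈ I, (∂F/∂t − ∂F/∂s)(t,0) = (∇³γ)(t). -/

import Mathlib

open Set Filter Topology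

noncomputable section

section Helpers

variable {E : Type*} [NormedAddCommGroup E] [NormedSpace ℝ E]

private lemma oneLe' : ((⊤ : ℕ∞) : WithTop ℕ∞) ≠ 0 := by
  simp

private lemma topAdd' : ((⊤ : ℕ∞) : WithTop ℕ∞) + 1 ≤ ((⊤ : ℕ∞) : WithTop ℕ∞) := by
  exact_mod_cast le_top

variable {g : ℝ × ℝ → E} {V : Set (ℝ × ℝ)}

private lemma mem_nhds_sectT (hV : IsOpen V) {a b : ℝ} (h : (a, b) ∈ V) :
    ∀ᶠ u in 𝓝 a, (u, b) ∈ V :=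
  (Continuous.continuousAt (continuous_id.prodMk continuous_const)).eventually_mem
    (hV.mem_nhds h)

private lemma mem_nhds_sectS (hV : IsOpen V) {a b : ℝ} (h : (a, b) ∈ V) :
    ∀ᶠ s in 𝓝 b, (a, s) ∈ V :=
  (Continuous.continuousAt (continuous_const.prodMk continuous_id)).eventually_mem
    (hV.mem_nhds h)

private lemma hasDerivAt_sectT (hV : IsOpen V) (hg : ContDiffOn ℝ (⊤ : ℕ∞) g V)
    {a b : ℝ} (h : (a, b) ∈ V) :
    HasDerivAt (fun u => g (u, b)) (fderiv ℝ g (a, b) (1, 0)) a := by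
  have hd : DifferentiableAt ℝ g (a, b) :=
    (hg.contDiffAt (hV.mem_nhds h)).differentiableAt oneLe'
  have h1 : HasDerivAt (fun u : ℝ => (u, b)) ((1 : ℝ), (0 : ℝ)) a :=
    (hasDerivAt_id a).prodMk (hasDerivAt_const a b)
  exact hd.hasFDerivAt.comp_hasDerivAt_of_eq _ h1 rfl

private lemma hasDerivAt_sectS (hV : IsOpen V) (hg : ContDiffOn ℝ (⊤ : ℕ∞) g V)
    {a b : ℝ} (h : (a, b) ∈ V) :
    HasDerivAt (fun s => g (a, s)) (fderiv ℝ g (a, b) (0, 1)) b := by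
  have hd : DifferentiableAt ℝ g (a, b) :=
    (hg.contDiffAt (hV.mem_nhds h)).differentiableAt oneLe'
  have h1 : HasDerivAt (fun s : ℝ => (a, s)) ((0 : ℝ), (1 : ℝ)) b :=
    (hasDerivAt_const b a).prodMk (hasDerivAt_id b)
  exact hd.hasFDerivAt.comp_hasDerivAt_of_eq _ h1 rfl

private lemma diff_sectT (hV : IsOpen V) (hg : ContDiffOn ℝ (⊤ : ℕ∞) g V)
    {a b : ℝ} (h : (a, b) ∈ V) : DifferentiableAt ℝ (fun u => g (u, b)) a :=
  (hasDerivAt_sectT hV hg h).differentiableAt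

private lemma diff_sectS (hV : IsOpen V) (hg : ContDiffOn ℝ (⊤ : ℕ∞) g V)
    {a b : ℝ} (h : (a, b) ∈ V) : DifferentiableAt ℝ (fun s => g (a, s)) b :=
  (hasDerivAt_sectS hV hg h).differentiableAt

private lemma contDiffOn_pderivT (hV : IsOpen V) (hg : ContDiffOn ℝ (⊤ : ℕ∞) g V) :
    ContDiffOn ℝ (⊤ : ℕ∞) (fun q : ℝ × ℝ => deriv (fun u => g (u, q.2)) q.1) V := by
  refine ContDiffOn.congr
    ((hg.fderiv_of_isOpen hV topAdd').clm_apply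
      (contDiffOn_const (c := ((1 : ℝ), (0 : ℝ))))) ?_
  intro q hq
  exact (hasDerivAt_sectT hV hg (show (q.1, q.2) ∈ V from hq)).deriv

private lemma contDiffOn_pderivS (hV : IsOpen V) (hg : ContDiffOn ℝ (⊤ : ℕ∞) g V) :
    ContDiffOn ℝ (⊤ : ℕ∞) (fun q : ℝ × ℝ => deriv (fun s => g (q.1, s)) q.2) V := by
  refine ContDiffOn.congr
    ((hg.fderiv_of_isOpen hV topAdd').clm_apply
      (contDiffOn_const (c := ((0 : ℝ), (1 : ℝ))))) ?_
  intro q hq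
  exact (hasDerivAt_sectS hV hg (show (q.1, q.2) ∈ V from hq)).deriv

private lemma clairaut (hV : IsOpen V) (hg : ContDiffOn ℝ (⊤ : ℕ∞) g V)
    {a b : ℝ} (h : (a, b) ∈ V) :
    deriv (fun s => deriv (fun u => g (u, s)) a) b =
      deriv (fun t => deriv (fun s => g (t, s)) b) a := by
  have hGsm : ContDiffOn ℝ (⊤ : ℕ∞) (fderiv ℝ g) V := hg.fderiv_of_isOpen hV topAdd'
  have hGd : HasFDerivAt (fderiv ℝ g) (fderiv ℝ (fderiv ℝ g) (a, b)) (a, b) :=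
    ((hGsm.contDiffAt (hV.mem_nhds h)).differentiableAt oneLe').hasFDerivAt
  have hEv : ∀ᶠ q in 𝓝 (a, b), HasFDerivAt g (fderiv ℝ g q) q := by
    filter_upwards [hV.mem_nhds h] with q hq
    exact ((hg.contDiffAt (hV.mem_nhds hq)).differentiableAt oneLe').hasFDerivAt
  have symm := second_derivative_symmetric_of_eventually hEv hGd
    ((0 : ℝ), (1 : ℝ)) ((1 : ℝ), (0 : ℝ))
  have hL : deriv (fun s => deriv (fun u => g (u, s)) a) b =
      fderiv ℝ (fderiv ℝ g) (a, b) (0, 1) (1, 0) := by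
    have e1 : (fun s => deriv (fun u => g (u, s)) a) =ᶠ[𝓝 b]
        fun s => fderiv ℝ g (a, s) (1, 0) := by
      filter_upwards [mem_nhds_sectS hV h] with s hs
      exact (hasDerivAt_sectT hV hg hs).deriv
    rw [e1.deriv_eq]
    have h2 : HasDerivAt (fun s : ℝ => (a, s)) ((0 : ℝ), (1 : ℝ)) b :=
      (hasDerivAt_const b a).prodMk (hasDerivAt_id b)
    have h3 : HasDerivAt (fun s : ℝ => fderiv ℝ g (a, s))
        (fderiv ℝ (fderiv ℝ g) (a, b) (0, 1)) b := hGd.comp_hasDerivAt_of_eq _ h2 rfl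
    have h4 := (h3.clm_apply (hasDerivAt_const b ((1 : ℝ), (0 : ℝ)))).deriv
    simpa using h4
  have hR : deriv (fun t => deriv (fun s => g (t, s)) b) a =
      fderiv ℝ (fderiv ℝ g) (a, b) (1, 0) (0, 1) := by
    have e1 : (fun t => deriv (fun s => g (t, s)) b) =ᶠ[𝓝 a]
        fun t => fderiv ℝ g (t, b) (0, 1) := by
      filter_upwards [mem_nhds_sectT hV h] with u hu
      exact (hasDerivAt_sectS hV hg hu).deriv
    rw [e1.deriv_eq]
    have h2 : HasDerivAt (fun u : ℝ => (u, b)) ((1 : ℝ), (0 : ℝ)) a :=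
      (hasDerivAt_id a).prodMk (hasDerivAt_const a b)
    have h3 : HasDerivAt (fun u : ℝ => fderiv ℝ g (u, b))
        (fderiv ℝ (fderiv ℝ g) (a, b) (1, 0)) a := hGd.comp_hasDerivAt_of_eq _ h2 rfl
    have h4 := (h3.clm_apply (hasDerivAt_const a ((0 : ℝ), (1 : ℝ)))).deriv
    simpa using h4
  rw [hL, hR, symm]

private lemma deriv_comp_apply {m : ℕ} {g : ℝ → Fin m → ℝ} {x : ℝ}
    (h : DifferentiableAt ℝ g x) (l : Fin m) :
    deriv (fun u => g u l) x = deriv g x l :=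
  (hasDerivAt_pi.1 h.hasDerivAt l).deriv

private lemma diff_comp_apply {m : ℕ} {g : ℝ → Fin m → ℝ} {x : ℝ}
    (h : DifferentiableAt ℝ g x) (l : Fin m) :
    DifferentiableAt ℝ (fun u => g u l) x :=
  (hasDerivAt_pi.1 h.hasDerivAt l).differentiableAt

/-- partial derivative in the first variable -/
@[reducible] private noncomputable def pdT {m : ℕ} (g : ℝ × ℝ → Fin m → ℝ) :
    ℝ × ℝ → Fin m → ℝ := fun q => deriv (fun u => g (u, q.2)) q.1

/-- partial derivative in the second variable -/
@[reducible] private noncomputable def pdS {m : ℕ} (g : ℝ × ℝ → Fin m → ℝ) :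
    ℝ × ℝ → Fin m → ℝ := fun q => deriv (fun s => g (q.1, s)) q.2

end Helpers

/-- Iterated covariant derivative of a curve `γ` with respect to the Christoffel
symbols `Γ` (in local coordinates): `covDeriv Γ γ k` is `∇^{k+1} γ`, i.e.
`covDeriv Γ γ 0 = ∇γ = γ'` and
`(∇^{k+1}γ)^λ(t) = d/dt (∇^k γ)^λ(t) + Σ_{μ,ν} Γ^λ_{μν}(γ(t)) (γ^μ)'(t) (∇^k γ)^ν(t)`. -/
noncomputable def covDeriv {m : ℕ} (Γ : (Fin m → ℝ) → Fin m → Fin m → Fin m → ℝ)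
    (γ : ℝ → Fin m → ℝ) : ℕ → ℝ → Fin m → ℝ
  | 0 => deriv γ
  | k + 1 => fun t l =>
      deriv (fun u => covDeriv Γ γ k u l) t +
        ∑ μ, ∑ ν, Γ (γ t) l μ ν * deriv γ t μ * covDeriv Γ γ k t ν

/-- `φ : W → Ω` is a geodesic flow for the Christoffel symbols `Γ` on the open set
`Ω ⊆ ℝ^m`: `W ⊆ Ω × ℝ^m × ℝ` is an open neighborhood of `Ω × ℝ^m × {0}`, `φ` is `C^∞`
on `W`, and for each `(x, v)` the curve `s ↦ φ(x, v, s)` is a geodesic with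
`φ(x,v,0) = x` and `∂φ/∂s(x,v,0) = v`. -/
structure IsGeodesicFlow {m : ℕ} (Γ : (Fin m → ℝ) → Fin m → Fin m → Fin m → ℝ)
    (Ω : Set (Fin m → ℝ)) (W : Set ((Fin m → ℝ) × (Fin m → ℝ) × ℝ))
    (φ : (Fin m → ℝ) × (Fin m → ℝ) × ℝ → Fin m → ℝ) : Prop where
  isOpen_W : IsOpen W
  subset_fst : ∀ p ∈ W, p.1 ∈ Ω
  mem_zero : ∀ x ∈ Ω, ∀ v, (x, v, (0 : ℝ)) ∈ W
  smooth : ContDiffOn ℝ (⊤ : ℕ∞) φ W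
  mapsTo : ∀ p ∈ W, φ p ∈ Ω
  init_pos : ∀ x ∈ Ω, ∀ v, φ (x, v, 0) = x
  init_vel : ∀ x ∈ Ω, ∀ v, deriv (fun s => φ (x, v, s)) 0 = v
  geodesic : ∀ p ∈ W, ∀ l,
    deriv (deriv (fun s => φ (p.1, p.2.1, s) l)) p.2.2 +
      ∑ μ, ∑ ν, Γ (φ p) l μ ν * deriv (fun s => φ (p.1, p.2.1, s) μ) p.2.2 *
        deriv (fun s => φ (p.1, p.2.1, s) ν) p.2.2 = 0

/-- If the connection is torsion free, then the characteristic vector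
field `(∂F/∂t − ∂F/∂s)(t,0)` of the `∇`-tangent surface, where `s F = ∂f/∂t − ∂f/∂s`,
equals `(∇³γ)(t)`. -/
theorem characteristic_vector_field_eq_third_covariant_derivative (m : ℕ)
    (Γ : (Fin m → ℝ) → Fin m → Fin m → Fin m → ℝ)
    (Ω : Set (Fin m → ℝ)) (hΩ : IsOpen Ω)
    (hΓ : ∀ l μ ν, ContDiffOn ℝ (⊤ : ℕ∞) (fun x => Γ x l μ ν) Ω)
    (hTF : ∀ x l μ ν, Γ x l μ ν = Γ x l ν μ)
    (W : Set ((Fin m → ℝ) × (Fin m → ℝ) × ℝ))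
    (φ : (Fin m → ℝ) × (Fin m → ℝ) × ℝ → Fin m → ℝ)
    (hφ : IsGeodesicFlow Γ Ω W φ)
    (I : Set ℝ) (hI : IsOpen I) (hI' : I.OrdConnected)
    (γ : ℝ → Fin m → ℝ) (hγ : ContDiffOn ℝ (⊤ : ℕ∞) γ I) (hγΩ : ∀ t ∈ I, γ t ∈ Ω)
    (V : Set (ℝ × ℝ)) (hV : IsOpen V) (hVI : V ⊆ I ×ˢ univ)
    (hV0 : ∀ t ∈ I, (t, (0 : ℝ)) ∈ V)
    (hVW : ∀ p ∈ V, (γ p.1, deriv γ p.1, p.2) ∈ W)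
    (f : ℝ × ℝ → Fin m → ℝ)
    (hf : ∀ p : ℝ × ℝ, f p = φ (γ p.1, deriv γ p.1, p.2))
    (F : ℝ × ℝ → Fin m → ℝ) (hF : ContDiffOn ℝ (⊤ : ℕ∞) F V)
    (hsF : ∀ p ∈ V, p.2 • F p =
      deriv (fun u => f (u, p.2)) p.1 - deriv (fun u => f (p.1, u)) p.2) :
    ∀ t ∈ I,
      (deriv (fun u => F (u, 0)) t - deriv (fun u => F (t, u)) 0) =
        covDeriv Γ γ 2 t := by
  intro t₀ ht₀
  -- basic facts about γ
  have hγ' : ContDiffOn ℝ (⊤ : ℕ∞) (deriv γ) I := hγ.deriv_of_isOpen hI topAdd'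
  have hγt : ∀ t ∈ I, HasDerivAt γ (deriv γ t) t := fun t ht =>
    ((hγ.contDiffAt (hI.mem_nhds ht)).differentiableAt oneLe').hasDerivAt
  have hγ't : ∀ t ∈ I, HasDerivAt (deriv γ) (deriv (deriv γ) t) t := fun t ht =>
    ((hγ'.contDiffAt (hI.mem_nhds ht)).differentiableAt oneLe').hasDerivAt
  have hIv : ∀ p : ℝ × ℝ, p ∈ V → p.1 ∈ I := fun p hp => (mem_prod.1 (hVI hp)).1
  -- smoothness of f
  have hfsm : ContDiffOn ℝ (⊤ : ℕ∞) f V := by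
    have h1 : ContDiffOn ℝ (⊤ : ℕ∞) (fun p : ℝ × ℝ => (γ p.1, deriv γ p.1, p.2)) V :=
      ContDiffOn.prodMk (hγ.comp contDiff_fst.contDiffOn hIv)
        (ContDiffOn.prodMk (hγ'.comp contDiff_fst.contDiffOn hIv) contDiff_snd.contDiffOn)
    exact (hφ.smooth.comp h1 fun p hp => hVW p hp).congr fun p hp => hf p
  -- smoothness of the partial derivative maps
  have hpdTsm : ContDiffOn ℝ (⊤ : ℕ∞) (pdT f) V := contDiffOn_pderivT hV hfsm
  have hpdSsm : ContDiffOn ℝ (⊤ : ℕ∞) (pdS f) V := contDiffOn_pderivS hV hfsm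
  have hpdTSsm : ContDiffOn ℝ (⊤ : ℕ∞) (pdS (pdT f)) V := contDiffOn_pderivS hV hpdTsm
  have hpdSSsm : ContDiffOn ℝ (⊤ : ℕ∞) (pdS (pdS f)) V := contDiffOn_pderivS hV hpdSsm
  have hpdSFsm : ContDiffOn ℝ (⊤ : ℕ∞) (pdS F) V := contDiffOn_pderivS hV hF
  have hq0 : (t₀, (0 : ℝ)) ∈ V := hV0 t₀ ht₀
  -- values at s = 0
  have hf0 : ∀ t ∈ I, f (t, 0) = γ t := fun t ht => by
    rw [hf]; exact hφ.init_pos (γ t) (hγΩ t ht) (deriv γ t)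
  have hsec : ∀ t : ℝ, (fun u => f (t, u)) = fun u => φ (γ t, deriv γ t, u) :=
    fun t => funext fun u => hf (t, u)
  have hfs0 : ∀ t ∈ I, pdS f (t, 0) = deriv γ t := fun t ht => by
    show deriv (fun u => f (t, u)) 0 = deriv γ t
    rw [hsec t]
    exact hφ.init_vel (γ t) (hγΩ t ht) (deriv γ t)
  -- the geodesic equation, in terms of pdS (pdS f)
  have hgeo : ∀ q ∈ V, ∀ l', pdS (pdS f) q l' =
      -∑ μ, ∑ ν, Γ (f q) l' μ ν * pdS f q μ * pdS f q ν := by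
    rintro ⟨t, s⟩ hq l'
    have hW : (γ t, deriv γ t, s) ∈ W := hVW (t, s) hq
    have hgeod : deriv (deriv (fun u => φ (γ t, deriv γ t, u) l')) s +
        ∑ μ, ∑ ν, Γ (φ (γ t, deriv γ t, s)) l' μ ν *
          deriv (fun u => φ (γ t, deriv γ t, u) μ) s *
          deriv (fun u => φ (γ t, deriv γ t, u) ν) s = 0 := hφ.geodesic _ hW l'
    have hval : φ (γ t, deriv γ t, s) = f (t, s) := (hf (t, s)).symm
    have hc : ∀ j : Fin m, (fun u => φ (γ t, deriv γ t, u) j) = fun u => f (t, u) j :=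
      fun j => funext fun u => (congrFun (hf (t, u)) j).symm
    rw [hval] at hgeod
    simp only [hc] at hgeod
    have hdcomp : ∀ j : Fin m, ∀ u : ℝ, (t, u) ∈ V →
        deriv (fun w => f (t, w) j) u = pdS f (t, u) j := fun j u hu =>
      deriv_comp_apply (diff_sectS hV hfsm hu) j
    have h2 : deriv (deriv (fun u => f (t, u) l')) s = pdS (pdS f) (t, s) l' := by
      have e1 : deriv (fun u => f (t, u) l') =ᶠ[𝓝 s] fun u => pdS f (t, u) l' := by
        filter_upwards [mem_nhds_sectS hV hq] with u hu using hdcomp l' u hu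
      rw [e1.deriv_eq]
      exact deriv_comp_apply (diff_sectS hV hpdSsm hq) l'
    rw [h2] at hgeod
    have h3 : ∀ j, deriv (fun u => f (t, u) j) s = pdS f (t, s) j := fun j => hdcomp j s hq
    simp only [h3] at hgeod
    linarith [hgeod]
  -- the value of pdS (pdS f) on the axis
  have hfss0 : ∀ t ∈ I, ∀ l', pdS (pdS f) (t, 0) l' =
      -∑ μ, ∑ ν, Γ (γ t) l' μ ν * deriv γ t μ * deriv γ t ν := fun t ht l' => by
    rw [hgeo (t, 0) (hV0 t ht) l', hf0 t ht, hfs0 t ht]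
  -- formula for covDeriv 1
  have hcov1 : ∀ t ∈ I, ∀ l', covDeriv Γ γ 1 t l' =
      deriv (deriv γ) t l' + ∑ μ, ∑ ν, Γ (γ t) l' μ ν * deriv γ t μ * deriv γ t ν := by
    intro t ht l'
    show deriv (fun u => deriv γ u l') t +
        ∑ μ, ∑ ν, Γ (γ t) l' μ ν * deriv γ t μ * deriv γ t ν = _
    rw [deriv_comp_apply ((hγ'.contDiffAt (hI.mem_nhds ht)).differentiableAt oneLe') l']
  -- F on the axis equals the second covariant derivative
  have hF0 : ∀ t ∈ I, F (t, 0) = covDeriv Γ γ 1 t := by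
    intro t ht
    have hq : (t, (0 : ℝ)) ∈ V := hV0 t ht
    have hk : DifferentiableAt ℝ (fun s => F (t, s)) 0 := diff_sectS hV hF hq
    have hL : HasDerivAt (fun s : ℝ => s • F (t, s)) (F (t, 0)) 0 := by
      have h := (hasDerivAt_id (0 : ℝ)).fun_smul hk.hasDerivAt
      simpa using h
    have hR : HasDerivAt (fun s => pdT f (t, s) - pdS f (t, s))
        (deriv (fun s => pdT f (t, s)) 0 - pdS (pdS f) (t, 0)) 0 :=
      HasDerivAt.sub (diff_sectS hV hpdTsm hq).hasDerivAt (diff_sectS hV hpdSsm hq).hasDerivAt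
    have hLR : (fun s : ℝ => s • F (t, s)) =ᶠ[𝓝 (0 : ℝ)]
        fun s => pdT f (t, s) - pdS f (t, s) := by
      filter_upwards [mem_nhds_sectS hV hq] with s hs
      exact hsF (t, s) hs
    have hEq := hL.unique (hR.congr_of_eventuallyEq hLR)
    have hmix : deriv (fun s => pdT f (t, s)) 0 = deriv (deriv γ) t := by
      have h1 : deriv (fun s => pdT f (t, s)) 0 = deriv (fun u => pdS f (u, 0)) t :=
        clairaut hV hfsm hq
      have h2 : (fun u => pdS f (u, 0)) =ᶠ[𝓝 t] deriv γ := by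
        filter_upwards [hI.mem_nhds ht] with u hu using hfs0 u hu
      rw [h1, h2.deriv_eq]
    funext l'
    rw [hEq]
    simp only [Pi.sub_apply]
    rw [hmix, hcov1 t ht l', hfss0 t ht l']
    ring
  -- ====== the main computation at t₀ ======
  funext l
  simp only [Pi.sub_apply]
  -- the t-part
  have hAeq : deriv (fun u => F (u, 0)) t₀ l = deriv (fun u => covDeriv Γ γ 1 u l) t₀ := by
    rw [← deriv_comp_apply (diff_sectT hV hF hq0) l]
    apply Filter.EventuallyEq.deriv_eq
    filter_upwards [hI.mem_nhds ht₀] with u hu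
    rw [hF0 u hu]
  -- derivative facts for Γ and γ at t₀
  have hΓfd : ∀ l' μ ν, HasFDerivAt (fun y => Γ y l' μ ν)
      (fderiv ℝ (fun y => Γ y l' μ ν) (γ t₀)) (γ t₀) := fun l' μ ν =>
    (((hΓ l' μ ν).contDiffAt (hΩ.mem_nhds (hγΩ t₀ ht₀))).differentiableAt oneLe').hasFDerivAt
  have hΓd : ∀ l' μ ν, HasDerivAt (fun u => Γ (γ u) l' μ ν)
      (fderiv ℝ (fun y => Γ y l' μ ν) (γ t₀) (deriv γ t₀)) t₀ := fun l' μ ν =>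
    (hΓfd l' μ ν).comp_hasDerivAt_of_eq _ (hγt t₀ ht₀) rfl
  have hc0 : HasDerivAt (fun s => f (t₀, s)) (deriv γ t₀) 0 := by
    have h := (diff_sectS hV hfsm hq0).hasDerivAt
    rwa [show deriv (fun s => f (t₀, s)) 0 = deriv γ t₀ from hfs0 t₀ ht₀] at h
  have hΓd' : ∀ l' μ ν, HasDerivAt (fun s => Γ (f (t₀, s)) l' μ ν)
      (fderiv ℝ (fun y => Γ y l' μ ν) (γ t₀) (deriv γ t₀)) 0 := fun l' μ ν => by
    have hfd : HasFDerivAt (fun y => Γ y l' μ ν)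
        (fderiv ℝ (fun y => Γ y l' μ ν) (γ t₀)) (f (t₀, 0)) := by
      rw [hf0 t₀ ht₀]; exact hΓfd l' μ ν
    exact hfd.comp_hasDerivAt_of_eq _ hc0 rfl
  have hfsdirs : HasDerivAt (fun s => pdS f (t₀, s)) (pdS (pdS f) (t₀, 0)) 0 :=
    (diff_sectS hV hpdSsm hq0).hasDerivAt
  have hfscomp : ∀ μ, HasDerivAt (fun s => pdS f (t₀, s) μ)
      (-∑ α, ∑ β, Γ (γ t₀) μ α β * deriv γ t₀ α * deriv γ t₀ β) 0 := fun μ => by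
    have h := hasDerivAt_pi.1 hfsdirs μ
    rwa [hfss0 t₀ ht₀ μ] at h
  -- Y : s-derivative of pdS (pdS f) (t₀, ·) l
  have hterm : ∀ μ ν, HasDerivAt
      (fun s => Γ (f (t₀, s)) l μ ν * pdS f (t₀, s) μ * pdS f (t₀, s) ν)
      ((fderiv ℝ (fun y => Γ y l μ ν) (γ t₀) (deriv γ t₀) * deriv γ t₀ μ
          + Γ (γ t₀) l μ ν * (-∑ α, ∑ β, Γ (γ t₀) μ α β * deriv γ t₀ α * deriv γ t₀ β))
          * deriv γ t₀ ν
        + Γ (γ t₀) l μ ν * deriv γ t₀ μ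
          * (-∑ α, ∑ β, Γ (γ t₀) ν α β * deriv γ t₀ α * deriv γ t₀ β)) 0 := by
    intro μ ν
    have h := ((hΓd' l μ ν).fun_mul (hfscomp μ)).fun_mul (hfscomp ν)
    rwa [hf0 t₀ ht₀, hfs0 t₀ ht₀] at h
  have hYfun : HasDerivAt (fun s => pdS (pdS f) (t₀, s) l)
      (-(∑ μ, ∑ ν,
        ((fderiv ℝ (fun y => Γ y l μ ν) (γ t₀) (deriv γ t₀) * deriv γ t₀ μ
          + Γ (γ t₀) l μ ν * (-∑ α, ∑ β, Γ (γ t₀) μ α β * deriv γ t₀ α * deriv γ t₀ β))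
          * deriv γ t₀ ν
        + Γ (γ t₀) l μ ν * deriv γ t₀ μ
          * (-∑ α, ∑ β, Γ (γ t₀) ν α β * deriv γ t₀ α * deriv γ t₀ β)))) 0 := by
    refine HasDerivAt.congr_of_eventuallyEq
      (HasDerivAt.fun_neg (HasDerivAt.fun_sum fun μ _ => HasDerivAt.fun_sum fun ν _ => hterm μ ν)) ?_
    filter_upwards [mem_nhds_sectS hV hq0] with s hs
    exact hgeo (t₀, s) hs l
  -- Z : t-derivative of pdS (pdS f) (·, 0) l
  have htermZ : ∀ μ ν, HasDerivAt
      (fun u => Γ (γ u) l μ ν * deriv γ u μ * deriv γ u ν)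
      ((fderiv ℝ (fun y => Γ y l μ ν) (γ t₀) (deriv γ t₀) * deriv γ t₀ μ
          + Γ (γ t₀) l μ ν * deriv (deriv γ) t₀ μ) * deriv γ t₀ ν
        + Γ (γ t₀) l μ ν * deriv γ t₀ μ * deriv (deriv γ) t₀ ν) t₀ := fun μ ν =>
    ((hΓd l μ ν).fun_mul (hasDerivAt_pi.1 (hγ't t₀ ht₀) μ)).fun_mul (hasDerivAt_pi.1 (hγ't t₀ ht₀) ν)
  have hZfun : HasDerivAt (fun u => pdS (pdS f) (u, 0) l)
      (-(∑ μ, ∑ ν, ((fderiv ℝ (fun y => Γ y l μ ν) (γ t₀) (deriv γ t₀) * deriv γ t₀ μ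
          + Γ (γ t₀) l μ ν * deriv (deriv γ) t₀ μ) * deriv γ t₀ ν
        + Γ (γ t₀) l μ ν * deriv γ t₀ μ * deriv (deriv γ) t₀ ν))) t₀ := by
    refine HasDerivAt.congr_of_eventuallyEq
      (HasDerivAt.fun_neg (HasDerivAt.fun_sum fun μ _ => HasDerivAt.fun_sum fun ν _ => htermZ μ ν)) ?_
    filter_upwards [hI.mem_nhds ht₀] with u hu
    exact hfss0 u hu l
  -- X : second s-derivative of pdT f equals the t-derivative of pdS (pdS f) (·,0)
  have hXval : deriv (fun s => pdS (pdT f) (t₀, s) l) 0 =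
      deriv (fun u => pdS (pdS f) (u, 0) l) t₀ := by
    rw [deriv_comp_apply (diff_sectS hV hpdTSsm hq0) l]
    have e1 : (fun s => pdS (pdT f) (t₀, s)) =ᶠ[𝓝 (0 : ℝ)]
        fun s => pdT (pdS f) (t₀, s) := by
      filter_upwards [mem_nhds_sectS hV hq0] with s hs
      exact clairaut hV hfsm hs
    rw [e1.deriv_eq]
    rw [show deriv (fun s => pdT (pdS f) (t₀, s)) 0 =
        deriv (fun u => pdS (pdS f) (u, 0)) t₀ from clairaut hV hpdSsm hq0]
    exact (deriv_comp_apply (diff_sectT hV hpdSSsm hq0) l).symm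
  -- B : second derivative identity from s • F = ∂f/∂t - ∂f/∂s
  have hkdiff : ∀ s : ℝ, (t₀, s) ∈ V → DifferentiableAt ℝ (fun u => F (t₀, u) l) s :=
    fun s hs => diff_comp_apply (diff_sectS hV hF hs) l
  have hBcomp : deriv (fun u => F (t₀, u)) 0 l = deriv (fun u => F (t₀, u) l) 0 :=
    (deriv_comp_apply (diff_sectS hV hF hq0) l).symm
  have hGfun : (fun s : ℝ => s * F (t₀, s) l) =ᶠ[𝓝 (0 : ℝ)]
      fun s => pdT f (t₀, s) l - pdS f (t₀, s) l := by
    filter_upwards [mem_nhds_sectS hV hq0] with s hs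
    have h := congrFun (hsF (t₀, s) hs) l
    simpa using h
  have hd1 : deriv (fun s : ℝ => s * F (t₀, s) l) =ᶠ[𝓝 (0 : ℝ)]
      fun s => F (t₀, s) l + s * deriv (fun u => F (t₀, u) l) s := by
    filter_upwards [mem_nhds_sectS hV hq0] with s hs
    have h := ((hasDerivAt_id s).fun_mul (hkdiff s hs).hasDerivAt).deriv
    simpa using h
  have hd2 : deriv (fun s : ℝ => pdT f (t₀, s) l - pdS f (t₀, s) l) =ᶠ[𝓝 (0 : ℝ)]
      fun s => pdS (pdT f) (t₀, s) l - pdS (pdS f) (t₀, s) l := by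
    filter_upwards [mem_nhds_sectS hV hq0] with s hs
    have h1 := hasDerivAt_pi.1 (diff_sectS hV hpdTsm hs).hasDerivAt l
    have h2 := hasDerivAt_pi.1 (diff_sectS hV hpdSsm hs).hasDerivAt l
    exact (h1.sub h2).deriv
  have hL2 : HasDerivAt (fun s => F (t₀, s) l + s * deriv (fun u => F (t₀, u) l) s)
      (deriv (fun u => F (t₀, u) l) 0 + deriv (fun u => F (t₀, u) l) 0) 0 := by
    have hk'ev : (fun s => deriv (fun u => F (t₀, u) l) s) =ᶠ[𝓝 (0 : ℝ)]
        fun s => pdS F (t₀, s) l := by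
      filter_upwards [mem_nhds_sectS hV hq0] with s hs
      exact deriv_comp_apply (diff_sectS hV hF hs) l
    have hk'diff : DifferentiableAt ℝ (fun s => deriv (fun u => F (t₀, u) l) s) 0 :=
      hk'ev.differentiableAt_iff.2 (diff_comp_apply (diff_sectS hV hpdSFsm hq0) l)
    have h1 := (hasDerivAt_id (0 : ℝ)).fun_mul hk'diff.hasDerivAt
    have h0 : HasDerivAt (fun s => F (t₀, s) l) (deriv (fun u => F (t₀, u) l) 0) 0 :=
      (hkdiff 0 hq0).hasDerivAt
    have h := h0.fun_add h1
    simpa using h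
  have hddF : deriv (deriv (fun s : ℝ => s * F (t₀, s) l)) 0 =
      deriv (fun u => F (t₀, u) l) 0 + deriv (fun u => F (t₀, u) l) 0 := by
    rw [hd1.deriv_eq]
    exact hL2.deriv
  have hX : HasDerivAt (fun s => pdS (pdT f) (t₀, s) l)
      (deriv (fun u => pdS (pdS f) (u, 0) l) t₀) 0 := by
    have h := (diff_comp_apply (diff_sectS hV hpdTSsm hq0) l).hasDerivAt
    rwa [hXval] at h
  have hddG : deriv (deriv (fun s : ℝ => pdT f (t₀, s) l - pdS f (t₀, s) l)) 0 =
      deriv (fun u => pdS (pdS f) (u, 0) l) t₀ -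
      (-(∑ μ, ∑ ν,
        ((fderiv ℝ (fun y => Γ y l μ ν) (γ t₀) (deriv γ t₀) * deriv γ t₀ μ
          + Γ (γ t₀) l μ ν * (-∑ α, ∑ β, Γ (γ t₀) μ α β * deriv γ t₀ α * deriv γ t₀ β))
          * deriv γ t₀ ν
        + Γ (γ t₀) l μ ν * deriv γ t₀ μ
          * (-∑ α, ∑ β, Γ (γ t₀) ν α β * deriv γ t₀ α * deriv γ t₀ β)))) := by
    rw [hd2.deriv_eq]
    exact (hX.sub hYfun).deriv
  have hsame : deriv (deriv (fun s : ℝ => s * F (t₀, s) l)) 0 =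
      deriv (deriv (fun s : ℝ => pdT f (t₀, s) l - pdS f (t₀, s) l)) 0 :=
    (hGfun.deriv).deriv_eq
  -- assemble: 2 * (∂F/∂s)(t₀,0)_l = Zval - Yval
  have hdd : deriv (fun u => F (t₀, u) l) 0 + deriv (fun u => F (t₀, u) l) 0 =
      (-(∑ μ, ∑ ν, ((fderiv ℝ (fun y => Γ y l μ ν) (γ t₀) (deriv γ t₀) * deriv γ t₀ μ
          + Γ (γ t₀) l μ ν * deriv (deriv γ) t₀ μ) * deriv γ t₀ ν
        + Γ (γ t₀) l μ ν * deriv γ t₀ μ * deriv (deriv γ) t₀ ν))) -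
      (-(∑ μ, ∑ ν,
        ((fderiv ℝ (fun y => Γ y l μ ν) (γ t₀) (deriv γ t₀) * deriv γ t₀ μ
          + Γ (γ t₀) l μ ν * (-∑ α, ∑ β, Γ (γ t₀) μ α β * deriv γ t₀ α * deriv γ t₀ β))
          * deriv γ t₀ ν
        + Γ (γ t₀) l μ ν * deriv γ t₀ μ
          * (-∑ α, ∑ β, Γ (γ t₀) ν α β * deriv γ t₀ α * deriv γ t₀ β)))) := by
    rw [← hddF, hsame, hddG, hZfun.deriv]
  -- the sum-swapping identity from torsion-freeness
  have hswapsum : ∀ (A B : Fin m → ℝ),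
      ∑ μ, ∑ ν, Γ (γ t₀) l μ ν * A μ * B ν = ∑ μ, ∑ ν, Γ (γ t₀) l μ ν * B μ * A ν := by
    intro A B
    rw [Finset.sum_comm]
    refine Finset.sum_congr rfl fun i _ => Finset.sum_congr rfl fun j _ => ?_
    rw [hTF (γ t₀) l j i]; ring
  have hdouble : ∀ (h₁ h₂ : Fin m → Fin m → ℝ), (∀ μ ν, h₁ μ ν = h₂ μ ν) →
      ∑ μ, ∑ ν, h₁ μ ν = ∑ μ, ∑ ν, h₂ μ ν := fun h₁ h₂ hh =>
    Finset.sum_congr rfl fun μ _ => Finset.sum_congr rfl fun ν _ => hh μ ν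
  have S2a : ∑ μ, ∑ ν, Γ (γ t₀) l μ ν * deriv (deriv γ) t₀ μ * deriv γ t₀ ν =
      ∑ μ, ∑ ν, Γ (γ t₀) l μ ν * deriv γ t₀ μ * deriv (deriv γ) t₀ ν :=
    hswapsum (deriv (deriv γ) t₀) (deriv γ t₀)
  have S2b : ∑ μ, ∑ ν, Γ (γ t₀) l μ ν *
        (∑ α, ∑ β, Γ (γ t₀) μ α β * deriv γ t₀ α * deriv γ t₀ β) * deriv γ t₀ ν =
      ∑ μ, ∑ ν, Γ (γ t₀) l μ ν * deriv γ t₀ μ *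
        (∑ α, ∑ β, Γ (γ t₀) ν α β * deriv γ t₀ α * deriv γ t₀ β) := by
    simpa using hswapsum
      (fun μ => ∑ α, ∑ β, Γ (γ t₀) μ α β * deriv γ t₀ α * deriv γ t₀ β) (deriv γ t₀)
  have e1 : (∑ μ, ∑ ν, ((fderiv ℝ (fun y => Γ y l μ ν) (γ t₀) (deriv γ t₀) * deriv γ t₀ μ
          + Γ (γ t₀) l μ ν * deriv (deriv γ) t₀ μ) * deriv γ t₀ ν
        + Γ (γ t₀) l μ ν * deriv γ t₀ μ * deriv (deriv γ) t₀ ν)) -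
      (∑ μ, ∑ ν,
        ((fderiv ℝ (fun y => Γ y l μ ν) (γ t₀) (deriv γ t₀) * deriv γ t₀ μ
          + Γ (γ t₀) l μ ν * (-∑ α, ∑ β, Γ (γ t₀) μ α β * deriv γ t₀ α * deriv γ t₀ β))
          * deriv γ t₀ ν
        + Γ (γ t₀) l μ ν * deriv γ t₀ μ
          * (-∑ α, ∑ β, Γ (γ t₀) ν α β * deriv γ t₀ α * deriv γ t₀ β))) =
      (∑ μ, ∑ ν, Γ (γ t₀) l μ ν * deriv (deriv γ) t₀ μ * deriv γ t₀ ν) +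
      (∑ μ, ∑ ν, Γ (γ t₀) l μ ν * deriv γ t₀ μ * deriv (deriv γ) t₀ ν) +
      (∑ μ, ∑ ν, Γ (γ t₀) l μ ν *
        (∑ α, ∑ β, Γ (γ t₀) μ α β * deriv γ t₀ α * deriv γ t₀ β) * deriv γ t₀ ν) +
      (∑ μ, ∑ ν, Γ (γ t₀) l μ ν * deriv γ t₀ μ *
        (∑ α, ∑ β, Γ (γ t₀) ν α β * deriv γ t₀ α * deriv γ t₀ β)) := by
    simp only [← Finset.sum_sub_distrib, ← Finset.sum_add_distrib]
    exact hdouble _ _ fun μ ν => by ring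
  have efin : ∑ μ, ∑ ν, Γ (γ t₀) l μ ν * deriv γ t₀ μ * covDeriv Γ γ 1 t₀ ν =
      (∑ μ, ∑ ν, Γ (γ t₀) l μ ν * deriv γ t₀ μ * deriv (deriv γ) t₀ ν) +
      (∑ μ, ∑ ν, Γ (γ t₀) l μ ν * deriv γ t₀ μ *
        (∑ α, ∑ β, Γ (γ t₀) ν α β * deriv γ t₀ α * deriv γ t₀ β)) := by
    simp only [← Finset.sum_add_distrib]
    refine hdouble _ _ fun μ ν => ?_
    rw [hcov1 t₀ ht₀ ν]; ring
  -- finish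
  rw [hAeq, hBcomp]
  have hcd2 : covDeriv Γ γ 2 t₀ l = deriv (fun u => covDeriv Γ γ 1 u l) t₀ +
      ∑ μ, ∑ ν, Γ (γ t₀) l μ ν * deriv γ t₀ μ * covDeriv Γ γ 1 t₀ ν := rfl
  rw [hcd2]
  linarith [hdd, e1, S2a, S2b, efin]
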